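/- Let S be a monoid and let (R, S) be a pair of classes of S-acts, each closed under isomorphism and containing all trivial acts, satisfying: (1) R ∩ S consists of trivial S-acts; (2) R is homomorphically closed; (3) S is closed under subacts; (4) every S-act A admits a system Σ of pairwise disjoint non-trivial subacts all belonging to R such that the Rees factor A/ρ_Σ belongs to S. Then R is closed under Rees extensions: if χ is a Rees congruence on an S-act A with A/χ ∈ R and every member of Σ_χ belongs to R, then A ∈ R. -/

import Mathlib

universe u

/-- A (left) `S`-act: a type equipped with a monoid action of `S`. -/
structure SAct (S : Type u) [Monoid S] where
  carrier : Type u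
  [mulAction : MulAction S carrier]

attribute [instance] SAct.mulAction

namespace SAct

variable {S : Type u} [Monoid S]

/-- A homomorphism of `S`-acts. -/
def IsHom (A B : SAct S) (f : A.carrier → B.carrier) : Prop :=
  ∀ (s : S) (a : A.carrier), f (s • a) = s • f a

/-- A homomorphism is trivial if its image has at most one element. -/
def IsTrivialHom {A B : SAct S} (f : A.carrier → B.carrier) : Prop :=
  (Set.range f).Subsingleton

/-- Two `S`-acts are isomorphic if there is a bijective homomorphism between them. -/
def AreIso (A B : SAct S) : Prop :=
  ∃ f : A.carrier → B.carrier, IsHom A B f ∧ Function.Bijective f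

/-- A subset of an `S`-act is a subact if it is closed under the action. -/
def IsSubact (A : SAct S) (B : Set A.carrier) : Prop :=
  ∀ (s : S), ∀ a ∈ B, s • a ∈ B

/-- The `S`-act induced on a subact. -/
def sub (A : SAct S) (B : Set A.carrier) (h : IsSubact A B) : SAct S where
  carrier := ↥B
  mulAction :=
    { smul := fun s b => ⟨s • (b : A.carrier), h s b b.2⟩
      one_smul := fun b => Subtype.ext (one_smul S (b : A.carrier))
      mul_smul := fun s t b => Subtype.ext (mul_smul s t (b : A.carrier)) }

/-- A congruence on an `S`-act: an equivalence relation compatible with the action. -/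
def IsActCon (A : SAct S) (ρ : Setoid A.carrier) : Prop :=
  ∀ (s : S) (a a' : A.carrier), ρ a a' → ρ (s • a) (s • a')

/-- The quotient `S`-act of an `S`-act by a congruence. -/
def quot (A : SAct S) (ρ : Setoid A.carrier) (h : IsActCon A ρ) : SAct S where
  carrier := Quotient ρ
  mulAction :=
    { smul := fun s => Quotient.map (fun a => s • a) (fun a b hab => h s a b hab)
      one_smul := fun q => Quotient.inductionOn q (fun a => by
        show Quotient.map (fun a => (1 : S) • a) _ (Quotient.mk ρ a) = Quotient.mk ρ a
        rw [Quotient.map_mk, one_smul])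
      mul_smul := fun s t q => Quotient.inductionOn q (fun a => by
        show Quotient.map (fun a => (s * t) • a) _ (Quotient.mk ρ a)
            = Quotient.map (fun a => s • a) _ (Quotient.map (fun a => t • a) _ (Quotient.mk ρ a))
        rw [Quotient.map_mk, Quotient.map_mk, Quotient.map_mk, mul_smul]) }

/-- A system of pairwise disjoint non-trivial subacts of an `S`-act. -/
def IsSystem (A : SAct S) (Sys : Set (Set A.carrier)) : Prop :=
  (∀ B ∈ Sys, IsSubact A B ∧ ¬ B.Subsingleton) ∧
    (∀ B ∈ Sys, ∀ C ∈ Sys, B ≠ C → ∀ a ∈ B, a ∉ C)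

/-- The Rees congruence determined by a system of pairwise disjoint
non-trivial subacts: `a` and `b` are related iff `a = b` or `a` and `b`
lie in a common member of the system. -/
def reesSetoid (A : SAct S) (Sys : Set (Set A.carrier)) (hSys : IsSystem A Sys) :
    Setoid A.carrier where
  r a b := a = b ∨ ∃ B ∈ Sys, a ∈ B ∧ b ∈ B
  iseqv :=
    { refl := fun _ => Or.inl rfl
      symm := by
        rintro a b (rfl | ⟨B, hB, ha, hb⟩)
        · exact Or.inl rfl
        · exact Or.inr ⟨B, hB, hb, ha⟩
      trans := by
        rintro a b c (rfl | ⟨B, hB, ha, hb⟩) h2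
        · exact h2
        · rcases h2 with rfl | ⟨C, hC, hb', hc⟩
          · exact Or.inr ⟨B, hB, ha, hb⟩
          · by_cases hBC : B = C
            · exact Or.inr ⟨B, hB, ha, hBC ▸ hc⟩
            · exact absurd hb' (hSys.2 B hB C hC hBC b hb) }

/-- A Rees congruence is a congruence. -/
theorem reesSetoid_isActCon (A : SAct S) (Sys : Set (Set A.carrier)) (hSys : IsSystem A Sys) :
    IsActCon A (reesSetoid A Sys hSys) := by
  rintro s a a' (rfl | ⟨B, hB, ha, ha'⟩)
  · exact Or.inl rfl
  · exact Or.inr ⟨B, hB, (hSys.1 B hB).1 s a ha, (hSys.1 B hB).1 s a' ha'⟩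

/-- The system of non-singleton classes of a congruence (for a Rees congruence,
this is its system `Σ_ρ` of non-trivial subacts). -/
def nsClasses (A : SAct S) (ρ : Setoid A.carrier) : Set (Set A.carrier) :=
  {C | (∃ a, C = {x | ρ x a}) ∧ ¬ C.Subsingleton}

/-- A congruence is a Rees congruence if it arises from a system of pairwise
disjoint non-trivial subacts. -/
def IsRees (A : SAct S) (ρ : Setoid A.carrier) : Prop :=
  ∃ (Sys : Set (Set A.carrier)) (hSys : IsSystem A Sys), ρ = reesSetoid A Sys hSys

end SAct

open SAct

/-- A (normal) Hoehnke radical: an assignment of a congruence `rad A` to every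
`S`-act `A`, functorial with respect to homomorphisms, and with
`rad (A / rad A) = Δ`. -/
structure HoehnkeRadical (S : Type u) [Monoid S] where
  rad : (A : SAct S) → Setoid A.carrier
  isCon : ∀ A : SAct S, IsActCon A (rad A)
  functorial : ∀ {A B : SAct S} (f : A.carrier → B.carrier), IsHom A B f →
    ∀ a a' : A.carrier, rad A a a' → rad B (f a) (f a')
  rad_quot : ∀ A : SAct S, rad (A.quot (rad A) (isCon A)) = ⊥

namespace HoehnkeRadical

variable {S : Type u} [Monoid S]

/-- The radical class `R_r = {A : r(A) = ∇_A}` of a Hoehnke radical. -/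
def radClass (r : HoehnkeRadical S) : Set (SAct S) := {A | r.rad A = ⊤}

/-- The semisimple class `S_r = {A : r(A) = Δ_A}` of a Hoehnke radical. -/
def ssClass (r : HoehnkeRadical S) : Set (SAct S) := {A | r.rad A = ⊥}

/-- The pointwise order on Hoehnke radicals. -/
def le (r r' : HoehnkeRadical S) : Prop := ∀ A : SAct S, r.rad A ≤ r'.rad A

end HoehnkeRadical

/-- A Kurosh-Amitsur radical: a Hoehnke radical such that (i) every `rad A` is a
Rees congruence, (ii) every member of `Σ_{rad A}` is in the radical class, and
(iii) every system of pairwise disjoint non-trivial subacts belonging to the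
radical class is below `Σ_{rad A}`. -/
structure KARadical (S : Type u) [Monoid S] extends HoehnkeRadical S where
  rees : ∀ A : SAct S, IsRees A (rad A)
  cls_rad : ∀ A : SAct S, ∀ B ∈ nsClasses A (rad A), ∀ h : IsSubact A B,
    A.sub B h ∈ toHoehnkeRadical.radClass
  maximal : ∀ (A : SAct S) (Sys : Set (Set A.carrier)), IsSystem A Sys →
    (∀ B ∈ Sys, ∀ h : IsSubact A B, A.sub B h ∈ toHoehnkeRadical.radClass) →
    ∀ B ∈ Sys, ∃ C ∈ nsClasses A (rad A), B ⊆ C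

/-- A torsion theory: a pair `(T, F)` of classes of `S`-acts, each closed under
isomorphism and containing all trivial acts, such that (1) every homomorphism
from a member of `T` to a member of `F` is trivial, (2) `T` contains every act
all of whose homomorphisms into members of `F` are trivial, and (3) `F`
contains every act all of whose homomorphisms from members of `T` are trivial. -/
structure IsTorsionTheory {S : Type u} [Monoid S] (T F : Set (SAct S)) : Prop where
  iso_T : ∀ A B : SAct S, AreIso A B → A ∈ T → B ∈ T
  iso_F : ∀ A B : SAct S, AreIso A B → A ∈ F → B ∈ F
  trivial_T : ∀ A : SAct S, Subsingleton A.carrier → A ∈ T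
  trivial_F : ∀ A : SAct S, Subsingleton A.carrier → A ∈ F
  hom_trivial : ∀ A ∈ T, ∀ B ∈ F, ∀ f : A.carrier → B.carrier,
    IsHom A B f → IsTrivialHom (A := A) (B := B) f
  mem_T : ∀ A : SAct S,
    (∀ B ∈ F, ∀ f : A.carrier → B.carrier, IsHom A B f → IsTrivialHom (A := A) (B := B) f) →
    A ∈ T
  mem_F : ∀ B : SAct S,
    (∀ A ∈ T, ∀ f : A.carrier → B.carrier, IsHom A B f → IsTrivialHom (A := A) (B := B) f) →
    B ∈ F

/-- The product of a family of `S`-acts. -/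
def prodAct {S : Type u} [Monoid S] (ι : Type u) (f : ι → SAct S) : SAct S where
  carrier := ∀ i, (f i).carrier
  mulAction := inferInstance

/-- The Hoehnke radical `r_C` determined by a class `C` closed under subacts and
products: the meet of all congruences whose quotient lies in `C`. -/
def radC {S : Type u} [Monoid S] (C : Set (SAct S)) (A : SAct S) : Setoid A.carrier :=
  sInf {χ : Setoid A.carrier | ∃ h : IsActCon A χ, A.quot χ h ∈ C}

/-- The radical class `R_{r_C}` of the Hoehnke radical `r_C`. -/
def RradC {S : Type u} [Monoid S] (C : Set (SAct S)) : Set (SAct S) :=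
  {A | radC C A = ⊤}

theorem pair_conditions_rees_extension_closed (S : Type u) [Monoid S]
    (R Sc : Set (SAct S))
    (hRiso : ∀ A B : SAct S, AreIso A B → A ∈ R → B ∈ R)
    (hSiso : ∀ A B : SAct S, AreIso A B → A ∈ Sc → B ∈ Sc)
    (hRtriv : ∀ A : SAct S, Subsingleton A.carrier → A ∈ R)
    (hStriv : ∀ A : SAct S, Subsingleton A.carrier → A ∈ Sc)
    (h1 : ∀ A : SAct S, A ∈ R → A ∈ Sc → Subsingleton A.carrier)
    (h2 : ∀ A ∈ R, ∀ B : SAct S, ∀ f : A.carrier → B.carrier,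
      IsHom A B f → Function.Surjective f → B ∈ R)
    (h3 : ∀ A ∈ Sc, ∀ (B : Set A.carrier) (h : IsSubact A B), A.sub B h ∈ Sc)
    (h4 : ∀ A : SAct S, ∃ (Sys : Set (Set A.carrier)) (hSys : IsSystem A Sys),
      (∀ B ∈ Sys, ∀ h : IsSubact A B, A.sub B h ∈ R) ∧
      A.quot (reesSetoid A Sys hSys) (reesSetoid_isActCon A Sys hSys) ∈ Sc)
    (A : SAct S) (χ : Setoid A.carrier) (hrees : IsRees A χ) (hc : IsActCon A χ)
    (hquot : A.quot χ hc ∈ R)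
    (hcls : ∀ B ∈ nsClasses A χ, ∀ h : IsSubact A B, A.sub B h ∈ R) :
    A ∈ R := by
  obtain ⟨Sys, hSys, hSysR, hQSc⟩ := h4 A
  set ρ := reesSetoid A Sys hSys with hρ
  set Q := A.quot ρ (reesSetoid_isActCon A Sys hSys) with hQ
  -- the quotient map is a hom
  have hq : IsHom A Q (Quotient.mk ρ) := by
    intro s a
    show _ = Quotient.map (fun a => s • a) _ (Quotient.mk ρ a)
    rw [Quotient.map_mk]
  -- Step 2: χ ≤ ρ
  have hle : ∀ a b : A.carrier, χ a b → ρ a b := by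
    intro a b hab
    by_cases heq : a = b
    · exact heq ▸ (reesSetoid A Sys hSys).refl a
    obtain ⟨Sys', hSys', hχ⟩ := hrees
    have hab' := hab
    rw [hχ] at hab'
    rcases hab' with rfl | ⟨B, hB, haB, hbB⟩
    · exact absurd rfl heq
    -- B is a non-singleton class of χ
    have hBsub : IsSubact A B := (hSys'.1 B hB).1
    have hBcls : B ∈ nsClasses A χ := by
      constructor
      · refine ⟨a, Set.eq_of_subset_of_subset ?_ ?_⟩
        · intro x hx
          rw [hχ]
          exact Or.inr ⟨B, hB, hx, haB⟩
        · intro x hx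
          simp only [Set.mem_setOf_eq, hχ] at hx
          rw [hχ] at hx
          rcases hx with rfl | ⟨C, hC, hxC, haC⟩
          · exact haB
          · by_cases hCB : C = B
            · exact hCB ▸ hxC
            · exact absurd haB (hSys'.2 C hC B hB hCB a haC)
      · exact (hSys'.1 B hB).2
    have hBR : A.sub B hBsub ∈ R := hcls B hBcls hBsub
    -- image of B in Q
    set D : Set Q.carrier := (Quotient.mk ρ) '' B with hD
    have hDsub : IsSubact Q D := by
      rintro s d ⟨x, hxB, rfl⟩
      exact ⟨s • x, hBsub s x hxB, (hq s x).symm⟩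
    have hDSc : Q.sub D hDsub ∈ Sc := h3 Q hQSc D hDsub
    have hDR : Q.sub D hDsub ∈ R := by
      refine h2 (A.sub B hBsub) hBR (Q.sub D hDsub)
        (fun x => ⟨Quotient.mk ρ x.1, ⟨x.1, x.2, rfl⟩⟩) ?_ ?_
      · intro s x
        exact Subtype.ext (hq s x.1)
      · rintro ⟨d, x, hxB, rfl⟩
        exact ⟨⟨x, hxB⟩, rfl⟩
    have hDss : Subsingleton (Q.sub D hDsub).carrier := h1 _ hDR hDSc
    have : (⟨Quotient.mk ρ a, ⟨a, haB, rfl⟩⟩ : (Q.sub D hDsub).carrier)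
        = ⟨Quotient.mk ρ b, ⟨b, hbB, rfl⟩⟩ := hDss.elim _ _
    exact Quotient.exact (congrArg Subtype.val this)
  -- Step 3: Q is a quotient of A/χ ∈ R, hence Q ∈ R
  have hQR : Q ∈ R := by
    refine h2 (A.quot χ hc) hquot Q
      (Quotient.map (fun a => a) (fun a b h => hle a b h)) ?_ ?_
    · intro s q'
      refine Quotient.inductionOn q' (fun a => ?_)
      show Quotient.map _ _ (Quotient.map (fun a => s • a) _ (Quotient.mk χ a)) = _
      rw [Quotient.map_mk, Quotient.map_mk]
      show _ = Quotient.map (fun a => s • a) _ (Quotient.map _ _ (Quotient.mk χ a))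
      rw [Quotient.map_mk, Quotient.map_mk]
    · intro q'
      refine Quotient.inductionOn q' (fun a => ⟨Quotient.mk χ a, ?_⟩)
      rw [Quotient.map_mk]
  have hQss : Subsingleton Q.carrier := h1 Q hQR hQSc
  -- Step 4: conclude
  by_cases hA : Subsingleton A.carrier
  · exact hRtriv A hA
  · obtain ⟨a, b, hab⟩ : ∃ a b : A.carrier, a ≠ b := by
      by_contra h
      push_neg at h
      exact hA ⟨h⟩
    have hρab : ρ a b := Quotient.exact (hQss.elim (Quotient.mk ρ a) (Quotient.mk ρ b))
    rcases hρab with rfl | ⟨B, hB, haB, hbB⟩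
    · exact absurd rfl hab
    have hBuniv : B = Set.univ := by
      refine Set.eq_univ_of_forall fun c => ?_
      have : ρ c a := Quotient.exact (hQss.elim (Quotient.mk ρ c) (Quotient.mk ρ a))
      rcases this with rfl | ⟨C, hC, hcC, haC⟩
      · exact haB
      · by_cases hCB : C = B
        · exact hCB ▸ hcC
        · exact absurd haB (hSys.2 C hC B hB hCB a haC)
    have hBsub : IsSubact A B := (hSys.1 B hB).1
    refine hRiso (A.sub B hBsub) A ⟨Subtype.val, fun s x => rfl, ?_, ?_⟩
      (hSysR B hB hBsub)
    · exact Subtype.val_injective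
    · exact fun x => ⟨⟨x, hBuniv ▸ Set.mem_univ x⟩, rfl⟩
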